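/- Let ψ ∈ W^{2ℓ,1}(a,b) with −∞ < a < b < ∞ and ℓ ≥ 1, and suppose ψ^{(k)}(a) = ψ^{(k)}(b) = 0 for k = 0,1,…,ℓ−1. Then for a.e. t ∈ (a,b): ψ^{(2ℓ−1)}(t) = ∫_a^t Q((2τ−a−b)/(b−a)) ψ^{(2ℓ)}(τ) dτ − ∫_t^b Q((a+b−2τ)/(b−a)) ψ^{(2ℓ)}(τ) dτ, where Q is the polynomial of degree 2ℓ−1 satisfying Q(t)+Q(−t)=1 and Q(−1)=Q'(−1)=⋯=Q^{(ℓ−1)}(−1)=0. -/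

import Mathlib

open Set MeasureTheory Polynomial intervalIntegral

/-- Fubini for the triangle {a < τ ≤ s ≤ b}. -/
lemma fubini_tri {a b : ℝ} (hab : a ≤ b) (f g : ℝ → ℝ)
    (hf : IntegrableOn f (Ioc a b) volume) (hg : Continuous g) :
    ∫ s in Ioc a b, g s * (∫ τ in Ioc a s, f τ) =
    ∫ τ in Ioc a b, (∫ s in Ioc τ b, g s) * f τ := by
  set μ := volume.restrict (Ioc a b) with hμ
  set F : ℝ → ℝ → ℝ := fun s τ => {p : ℝ × ℝ | p.2 ≤ p.1}.indicator
    (fun p => g p.1 * f p.2) (s, τ) with hF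
  obtain ⟨C, hC⟩ : ∃ C, ∀ s ∈ Icc a b, ‖g s‖ ≤ C :=
    isCompact_Icc.exists_bound_of_continuousOn hg.continuousOn
  have hC0 : 0 ≤ C := le_trans (norm_nonneg _) (hC a ⟨le_refl a, hab⟩)
  have hmeasset : MeasurableSet {p : ℝ × ℝ | p.2 ≤ p.1} :=
    measurableSet_le measurable_snd measurable_fst
  have hmeas : AEStronglyMeasurable (Function.uncurry F) (μ.prod μ) := by
    apply AEStronglyMeasurable.indicator _ hmeasset
    exact ((hg.comp continuous_fst).aestronglyMeasurable).mul hf.aestronglyMeasurable.comp_snd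
  have hdom : Integrable (fun p : ℝ × ℝ => C * |f p.2|) (μ.prod μ) := by
    have h1 : Integrable (fun _ : ℝ => C) μ :=
      (integrableOn_const measure_Ioc_lt_top.ne)
    exact h1.mul_prod hf.norm
  have hbound : ∀ᵐ p ∂(μ.prod μ), ‖Function.uncurry F p‖ ≤ C * |f p.2| := by
    have hprod : μ.prod μ = (volume.prod volume).restrict ((Ioc a b) ×ˢ (Ioc a b)) := by
      rw [hμ, Measure.prod_restrict]
    rw [hprod]
    filter_upwards [ae_restrict_mem (measurableSet_Ioc.prod measurableSet_Ioc)] with p hp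
    rcases hp with ⟨hp1, hp2⟩
    by_cases h : p.2 ≤ p.1
    · have : Function.uncurry F p = g p.1 * f p.2 := by
        simp [F, Function.uncurry, Set.indicator_of_mem, h]
      rw [this, norm_mul]
      exact mul_le_mul (hC p.1 (Ioc_subset_Icc_self hp1)) le_rfl (norm_nonneg _) hC0
    · have : Function.uncurry F p = 0 := by
        simp [F, Function.uncurry, Set.indicator_of_notMem, h]
      rw [this]
      simp only [norm_zero]
      exact mul_nonneg hC0 (abs_nonneg _)
  have hFint : Integrable (Function.uncurry F) (μ.prod μ) := Integrable.mono' hdom hmeas hbound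
  have hswap := MeasureTheory.integral_integral_swap hFint
  have hL : ∫ s, ∫ τ, F s τ ∂μ ∂μ = ∫ s in Ioc a b, g s * (∫ τ in Ioc a s, f τ) := by
    rw [hμ]
    apply setIntegral_congr_ae measurableSet_Ioc
    filter_upwards with s hs
    have : (fun τ => F s τ) = fun τ => (Iic s).indicator (fun τ => g s * f τ) τ := by
      funext τ
      by_cases h : τ ≤ s <;> simp [F, Set.indicator, h]
    rw [this, setIntegral_indicator measurableSet_Iic]
    have hset : Iic s ∩ Ioc a b = Ioc a s := by
      ext x; simp only [mem_inter_iff, mem_Iic, mem_Ioc]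
      constructor
      · rintro ⟨h1, h2, h3⟩; exact ⟨h2, h1⟩
      · rintro ⟨h1, h2⟩; exact ⟨h2, h1, h2.trans hs.2⟩
    rw [inter_comm] at hset
    rw [hset, MeasureTheory.integral_const_mul]
  have hR : ∫ τ, ∫ s, F s τ ∂μ ∂μ = ∫ τ in Ioc a b, (∫ s in Ioc τ b, g s) * f τ := by
    rw [hμ]
    apply setIntegral_congr_ae measurableSet_Ioc
    filter_upwards with τ hτ
    have : (fun s => F s τ) = fun s => (Ici τ).indicator (fun s => g s * f τ) s := by
      funext s
      by_cases h : τ ≤ s <;> simp [F, Set.indicator, h]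
    rw [this, setIntegral_indicator measurableSet_Ici]
    have hset : Ici τ ∩ Ioc a b = Icc τ b := by
      ext x; simp only [mem_inter_iff, mem_Ici, mem_Ioc, mem_Icc]
      constructor
      · rintro ⟨h1, h2, h3⟩; exact ⟨h1, h3⟩
      · rintro ⟨h1, h2⟩; exact ⟨h1, hτ.1.trans_le h1, h2⟩
    rw [inter_comm] at hset
    rw [hset, integral_Icc_eq_integral_Ioc, MeasureTheory.integral_mul_const]
  rw [← hL, hswap, hR]

/-- Integration by parts against a primitive. -/
lemma ibp_poly {a b : ℝ} (hab : a < b) (u : Polynomial ℝ) (f v : ℝ → ℝ)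
    (hf : IntegrableOn f (Icc a b) volume)
    (hv : ∀ t ∈ Icc a b, v t = v a + ∫ s in a..t, f s) :
    ∫ τ in a..b, u.eval τ * f τ =
      u.eval b * v b - u.eval a * v a - ∫ s in a..b, (derivative u).eval s * v s := by
  have hfI : IntegrableOn f (Ioc a b) volume := hf.mono_set Ioc_subset_Icc_self
  have hftc : ∀ c d : ℝ, ∫ s in c..d, (derivative u).eval s = u.eval d - u.eval c := by
    intro c d
    exact integral_eq_sub_of_hasDerivAt (fun x _ => u.hasDerivAt x)
      ((Polynomial.continuous _).intervalIntegrable c d)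
  have hufI : IntegrableOn (fun τ => u.eval τ * f τ) (Ioc a b) volume :=
    (IntegrableOn.continuousOn_mul (Polynomial.continuous u).continuousOn hf
      isCompact_Icc).mono_set Ioc_subset_Icc_self
  have hvb : v b = v a + ∫ τ in Ioc a b, f τ := by
    rw [hv b ⟨hab.le, le_refl b⟩, integral_of_le hab.le]
  have key : ∫ s in Ioc a b, (derivative u).eval s * v s =
      v a * (u.eval b - u.eval a) + (u.eval b * (∫ τ in Ioc a b, f τ)
        - ∫ τ in Ioc a b, u.eval τ * f τ) := by
    have h1 : ∫ s in Ioc a b, (derivative u).eval s * v s =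
        ∫ s in Ioc a b, ((derivative u).eval s * v a
          + (derivative u).eval s * (∫ τ in Ioc a s, f τ)) := by
      apply setIntegral_congr_ae measurableSet_Ioc
      filter_upwards with s hs
      rw [hv s ⟨hs.1.le, hs.2⟩, integral_of_le hs.1.le, mul_add]
    have hA : IntegrableOn (fun s => (derivative u).eval s * v a) (Ioc a b) volume :=
      ((Polynomial.continuous _).mul continuous_const).integrableOn_Ioc
    have hB : IntegrableOn (fun s => (derivative u).eval s * (∫ τ in Ioc a s, f τ))
        (Ioc a b) volume := by
      apply IntegrableOn.mono_set _ (Ioc_subset_Icc_self (a := a) (b := b))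
      exact ContinuousOn.integrableOn_compact isCompact_Icc
        (((Polynomial.continuous _).continuousOn).mul (continuousOn_primitive hf))
    rw [h1, integral_add hA hB]
    have h2 : ∫ s in Ioc a b, (derivative u).eval s * v a = v a * (u.eval b - u.eval a) := by
      rw [MeasureTheory.integral_mul_const, ← integral_of_le hab.le, hftc, mul_comm]
    have h3 : ∫ s in Ioc a b, (derivative u).eval s * (∫ τ in Ioc a s, f τ)
        = u.eval b * (∫ τ in Ioc a b, f τ) - ∫ τ in Ioc a b, u.eval τ * f τ := by
      rw [fubini_tri hab.le f _ hfI (Polynomial.continuous _)]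
      have h4 : ∫ τ in Ioc a b, (∫ s in Ioc τ b, (derivative u).eval s) * f τ
          = ∫ τ in Ioc a b, (u.eval b * f τ - u.eval τ * f τ) := by
        apply setIntegral_congr_ae measurableSet_Ioc
        filter_upwards with τ hτ
        rw [← integral_of_le hτ.2, hftc, sub_mul]
      rw [h4, integral_sub (hfI.const_mul _) hufI, MeasureTheory.integral_const_mul]
    rw [h2, h3]
  rw [integral_of_le hab.le, integral_of_le hab.le, key, hvb]
  ring

/-- iterated derivative of a composition with a linear polynomial -/
lemma iter_deriv_comp_linear (Q : Polynomial ℝ) (k c : ℝ) (j : ℕ) :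
    derivative^[j] (Q.comp (C k * X + C c)) =
      C (k^j) * (derivative^[j] Q).comp (C k * X + C c) := by
  induction j with
  | zero => simp
  | succ j ih =>
    rw [Function.iterate_succ_apply', ih, derivative_C_mul, derivative_comp]
    have hdL : derivative (C k * X + C c : Polynomial ℝ) = C k := by
      simp
    rw [hdL, Function.iterate_succ_apply', pow_succ, C_mul]
    ring

lemma q_deriv_one (Q : Polynomial ℝ) (hQsym : ∀ t : ℝ, Q.eval t + Q.eval (-t) = 1)
    {j : ℕ} (hj : 1 ≤ j) :
    (derivative^[j] Q).eval 1 + (-1:ℝ)^j * (derivative^[j] Q).eval (-1) = 0 := by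
  set N : Polynomial ℝ := Q.comp (C (-1) * X + C 0) with hN
  have hNeval : ∀ t : ℝ, N.eval t = Q.eval (-t) := by
    intro t; simp [hN, eval_comp]
  have hsum : Q + N = C 1 := by
    apply Polynomial.funext
    intro r
    simp only [eval_add, eval_C, hNeval]
    exact hQsym r
  have hadd : ∀ n : ℕ, derivative^[n] (Q + N) = derivative^[n] Q + derivative^[n] N := by
    intro n
    induction n with
    | zero => simp
    | succ n ih =>
      rw [Function.iterate_succ_apply', ih, derivative_add,
        Function.iterate_succ_apply' derivative n Q,
        Function.iterate_succ_apply' derivative n N]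
  have hiter : derivative^[j] Q + derivative^[j] N = 0 := by
    rw [← hadd, hsum]
    exact iterate_derivative_eq_zero (by simpa using Nat.lt_of_lt_of_le Nat.zero_lt_one hj)
  have hNder : derivative^[j] N = C ((-1:ℝ)^j) * (derivative^[j] Q).comp (C (-1) * X + C 0) :=
    iter_deriv_comp_linear Q (-1) 0 j
  have := congrArg (Polynomial.eval (1:ℝ)) hiter
  simpa [hNder, eval_comp] using this

/-- Representation of ψ^{(2ℓ−1)} for ψ ∈ W^{2ℓ,1}(a,b) with vanishing boundary
derivatives of orders 0,…,ℓ−1, in terms of ψ^{(2ℓ)} and the Green polynomial Q.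
Here ψ k is the (absolutely continuous representative of the) k-th weak derivative. -/
theorem stmt7 (ℓ : ℕ) (hℓ : 1 ≤ ℓ) (a b : ℝ) (hab : a < b)
    (ψ : ℕ → ℝ → ℝ)
    (hint : ∀ k ≤ 2*ℓ, IntegrableOn (ψ k) (Icc a b) volume)
    (hderiv : ∀ k < 2*ℓ, ∀ t ∈ Icc a b, ψ k t = ψ k a + ∫ s in a..t, ψ (k+1) s)
    (hbry : ∀ k < ℓ, ψ k a = 0 ∧ ψ k b = 0)
    (Q : Polynomial ℝ) (hQdeg : Q.natDegree = 2*ℓ-1)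
    (hQsym : ∀ t : ℝ, Q.eval t + Q.eval (-t) = 1)
    (hQvan : ∀ k < ℓ, (derivative^[k] Q).eval (-1) = 0) :
    ∀ᵐ t ∂(volume.restrict (Ioo a b)),
      ψ (2*ℓ-1) t =
        (∫ τ in a..t, Q.eval ((2*τ - a - b)/(b - a)) * ψ (2*ℓ) τ)
          - ∫ τ in t..b, Q.eval ((a + b - 2*τ)/(b - a)) * ψ (2*ℓ) τ := by
  have hba : (0:ℝ) < b - a := sub_pos.2 hab
  set km : ℝ := 2/(b-a) with hkm
  set cm : ℝ := -(a+b)/(b-a) with hcm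
  set L : Polynomial ℝ := C km * X + C cm with hLdef
  set P : Polynomial ℝ := Q.comp L with hPdef
  have hLeval : ∀ τ : ℝ, L.eval τ = (2*τ - a - b)/(b-a) := by
    intro τ
    simp only [hLdef, eval_add, eval_mul, eval_C, eval_X, hkm, hcm]
    field_simp
    ring
  have hLa : L.eval a = -1 := by
    rw [hLeval, div_eq_iff hba.ne']; ring
  have hLb : L.eval b = 1 := by
    rw [hLeval, div_eq_one_iff_eq hba.ne']; ring
  have hPeval : ∀ τ : ℝ, P.eval τ = Q.eval ((2*τ - a - b)/(b-a)) := by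
    intro τ; rw [hPdef, eval_comp, hLeval]
  have hPj : ∀ j, derivative^[j] P = C (km^j) * (derivative^[j] Q).comp L := by
    intro j; rw [hPdef, hLdef]; exact iter_deriv_comp_linear Q km cm j
  have hQm1 : Q.eval (-1) = 0 := by
    have := hQvan 0 (by omega)
    simpa using this
  have hQ1 : Q.eval 1 = 1 := by
    have := hQsym 1
    rw [hQm1] at this; linarith
  have hPa : ∀ j, j < ℓ → (derivative^[j] P).eval a = 0 := by
    intro j hj
    rw [hPj, eval_mul, eval_C, eval_comp, hLa, hQvan j hj, mul_zero]
  have hPb : ∀ j, 1 ≤ j → j < ℓ → (derivative^[j] P).eval b = 0 := by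
    intro j h1 h2
    have hq := q_deriv_one Q hQsym h1
    rw [hQvan j h2, mul_zero, add_zero] at hq
    rw [hPj, eval_mul, eval_C, eval_comp, hLb, hq, mul_zero]
  have hPa0 : P.eval a = 0 := by rw [hPdef, eval_comp, hLa, hQm1]
  have hPb1 : P.eval b = 1 := by rw [hPdef, eval_comp, hLb, hQ1]
  have hPtop : derivative^[2*ℓ] P = 0 := by
    apply iterate_derivative_eq_zero
    have hkm0 : km ≠ 0 := by
      rw [hkm]; positivity
    have hL1 : L.natDegree = 1 := by
      rw [hLdef]
      compute_degree!
    rw [hPdef, natDegree_comp, hL1, hQdeg, mul_one]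
    omega
  set S : ℕ → ℝ := fun j => ∫ τ in a..b, (derivative^[j] P).eval τ * ψ (2*ℓ - j) τ with hS
  have main : ∀ m j, j + m = 2*ℓ → S j = if j = 0 then ψ (2*ℓ - 1) b else 0 := by
    intro m
    induction m with
    | zero =>
      intro j hj
      have hj' : j = 2*ℓ := by omega
      subst hj'
      rw [if_neg (by omega)]
      simp only [hS, hPtop]
      simp
    | succ m ih =>
      intro j hj
      have hk1 : (2*ℓ - 1 - j) + 1 = 2*ℓ - j := by omega
      have hibp := ibp_poly hab (derivative^[j] P) (ψ (2*ℓ - j)) (ψ (2*ℓ - 1 - j))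
        (hint _ (by omega))
        (by intro t ht
            have := hderiv (2*ℓ - 1 - j) (by omega) t ht
            rwa [hk1] at this)
      have hSj1 : S (j+1) = 0 := by
        rw [ih (j+1) (by omega), if_neg (by omega)]
      have hder' : derivative (derivative^[j] P) = derivative^[j+1] P :=
        (Function.iterate_succ_apply' derivative j P).symm
      have h2 : (2*ℓ - (j+1)) = 2*ℓ - 1 - j := by omega
      have hSeq : S j = (derivative^[j] P).eval b * ψ (2*ℓ - 1 - j) b
          - (derivative^[j] P).eval a * ψ (2*ℓ - 1 - j) a - S (j+1) := by
        simp only [hS]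
        rw [hibp, hder', h2]
      rw [hSeq, hSj1, sub_zero]
      by_cases hj0 : j = 0
      · subst hj0
        rw [if_pos rfl]
        simp only [Function.iterate_zero, id_eq] at *
        rw [hPb1, hPa0]
        have : 2*ℓ - 1 - 0 = 2*ℓ - 1 := by omega
        rw [this]
        ring
      · rw [if_neg hj0]
        rcases lt_or_ge j ℓ with hcase | hcase
        · rw [hPa j hcase, hPb j (by omega) hcase]; ring
        · obtain ⟨ha0, hb0⟩ := hbry (2*ℓ - 1 - j) (by omega)
          rw [ha0, hb0]; ring
  have hS0 : ∫ τ in a..b, P.eval τ * ψ (2*ℓ) τ = ψ (2*ℓ - 1) b := by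
    have h := main (2*ℓ) 0 (by omega)
    rw [if_pos rfl] at h
    simp only [hS, Function.iterate_zero, id_eq, Nat.sub_zero] at h
    exact h
  -- integrability helpers
  have hfint : IntegrableOn (ψ (2*ℓ)) (Icc a b) volume := hint _ le_rfl
  have hPfI : IntegrableOn (fun τ => P.eval τ * ψ (2*ℓ) τ) (Icc a b) volume :=
    IntegrableOn.continuousOn_mul (Polynomial.continuous P).continuousOn hfint isCompact_Icc
  have hPint : ∀ c d : ℝ, c ∈ Icc a b → d ∈ Icc a b →
      IntervalIntegrable (fun τ => P.eval τ * ψ (2*ℓ) τ) volume c d := by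
    intro c d hc hd
    exact (hPfI.mono_set (uIcc_subset_Icc hc hd)).intervalIntegrable
  have hψint : ∀ c d : ℝ, c ∈ Icc a b → d ∈ Icc a b →
      IntervalIntegrable (ψ (2*ℓ)) volume c d := by
    intro c d hc hd
    exact (hfint.mono_set (uIcc_subset_Icc hc hd)).intervalIntegrable
  rw [ae_restrict_iff' measurableSet_Ioo]
  refine Filter.Eventually.of_forall fun t ht => ?_
  have hta : a ≤ t := ht.1.le
  have htb : t ≤ b := ht.2.le
  have htm : t ∈ Icc a b := ⟨hta, htb⟩
  have ham : a ∈ Icc a b := ⟨le_refl a, hab.le⟩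
  have hbm : b ∈ Icc a b := ⟨hab.le, le_refl b⟩
  have e1 : ∀ x : ℝ, Q.eval ((2*x - a - b)/(b-a)) * ψ (2*ℓ) x = P.eval x * ψ (2*ℓ) x := by
    intro x; rw [hPeval]
  have e2 : ∀ x : ℝ, Q.eval ((a + b - 2*x)/(b-a)) * ψ (2*ℓ) x
      = ψ (2*ℓ) x - P.eval x * ψ (2*ℓ) x := by
    intro x
    have hneg : (a + b - 2*x)/(b-a) = -((2*x - a - b)/(b-a)) := by ring
    have hq := hQsym ((2*x - a - b)/(b-a))
    rw [hneg]
    have : Q.eval (-((2*x - a - b)/(b-a))) = 1 - P.eval x := by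
      rw [hPeval]; linarith
    rw [this]; ring
  simp only [e1, e2]
  rw [integral_sub (hψint t b htm hbm) (hPint t b htm hbm)]
  have hadd : (∫ τ in a..t, P.eval τ * ψ (2*ℓ) τ) + ∫ τ in t..b, P.eval τ * ψ (2*ℓ) τ
      = ∫ τ in a..b, P.eval τ * ψ (2*ℓ) τ :=
    integral_add_adjacent_intervals (hPint a t ham htm) (hPint t b htm hbm)
  have hidx : 2*ℓ - 1 + 1 = 2*ℓ := by omega
  have hfb : ψ (2*ℓ-1) b = ψ (2*ℓ-1) a + ∫ s in a..b, ψ (2*ℓ) s := by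
    have := hderiv (2*ℓ-1) (by omega) b hbm
    rwa [hidx] at this
  have hft : ψ (2*ℓ-1) t = ψ (2*ℓ-1) a + ∫ s in a..t, ψ (2*ℓ) s := by
    have := hderiv (2*ℓ-1) (by omega) t htm
    rwa [hidx] at this
  have hsub : ∫ s in t..b, ψ (2*ℓ) s
      = (∫ s in a..b, ψ (2*ℓ) s) - ∫ s in a..t, ψ (2*ℓ) s :=
    (integral_interval_sub_left (hψint a b ham hbm) (hψint a t ham htm)).symm
  rw [hS0] at hadd
  linarith [hadd, hfb, hft, hsub]
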